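/- Let C be a quotienting lattice of regular languages and L a regular language with syntactic morphism α_L : A* → M_L and syntactic order ≤_L. If L ∈ Pol(C), then s^{ω+1} ≤_L s^ω t s^ω for all C-pairs (s,t) ∈ M_L². -/

import Mathlib

/-- A language is regular when it is accepted by a DFA with finitely many states. -/
def IsReg {A : Type} (L : Set (List A)) : Prop :=
  ∃ (σ : Type) (_ : Fintype σ) (dfa : DFA A σ), ∀ w : List A, w ∈ dfa.accepts ↔ w ∈ L

/-- `(s,t)` is a `C`-pair for `α`. -/
def CPair {A M : Type} (C : Set (Set (List A))) (α : List A → M) (s t : M) : Prop :=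
  ¬ ∃ K ∈ C, α ⁻¹' {s} ⊆ K ∧ K ∩ α ⁻¹' {t} = ∅

/-- The polynomial closure of `C`. -/
inductive Pol {A : Type} (C : Set (Set (List A))) : Set (List A) → Prop
  | base (L : Set (List A)) (h : L ∈ C) : Pol C L
  | union (H L : Set (List A)) (hH : Pol C H) (hL : Pol C L) : Pol C (H ∪ L)
  | marked (H L : Set (List A)) (a : A) (hH : Pol C H) (hL : Pol C L) :
      Pol C {w : List A | ∃ u ∈ H, ∃ v ∈ L, w = u ++ a :: v}

namespace Stmt10Aux

/-! ### Word powers -/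

def wpow {A : Type} (u : List A) : ℕ → List A
  | 0 => []
  | n + 1 => u ++ wpow u n

lemma wpow_add {A : Type} (u : List A) (m k : ℕ) :
    wpow u (m + k) = wpow u m ++ wpow u k := by
  induction m with
  | zero => simp [wpow]
  | succ m ih => rw [Nat.succ_add]; simp [wpow, ih, List.append_assoc]

/-! ### Finiteness of two-sided quotients of a regular language -/

lemma quot_finite {A : Type} (K : Set (List A)) (h : IsReg K) :
    {X : Set (List A) | ∃ p q : List A, X = {w | p ++ w ++ q ∈ K}}.Finite := by
  obtain ⟨σ, inst, dfa, hdfa⟩ := h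
  have key : ∀ p q : List A, {w | p ++ w ++ q ∈ K} =
      {w | dfa.evalFrom (dfa.eval p) w ∈ {st | dfa.evalFrom st q ∈ dfa.accept}} := by
    intro p q
    ext w
    simp only [Set.mem_setOf_eq]
    rw [← hdfa, dfa.mem_accepts]
    unfold DFA.eval
    rw [dfa.evalFrom_of_append, dfa.evalFrom_of_append]
  apply Set.Finite.subset (Set.finite_range
    (fun z : σ × Set σ => {w | dfa.evalFrom z.1 w ∈ z.2}))
  rintro X ⟨p, q, rfl⟩
  exact ⟨⟨dfa.eval p, {st | dfa.evalFrom st q ∈ dfa.accept}⟩, (key p q).symm⟩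

/-! ### Closure properties of a lattice of languages -/

lemma C_sInter {A : Type} (C : Set (Set (List A))) (huniv : (Set.univ : Set (List A)) ∈ C)
    (hinter : ∀ K L : Set (List A), K ∈ C → L ∈ C → K ∩ L ∈ C)
    (S : Set (Set (List A))) (hfin : S.Finite) :
    (∀ K ∈ S, K ∈ C) → ⋂₀ S ∈ C := by
  refine Set.Finite.induction_on (motive := fun S _ => (∀ K ∈ S, K ∈ C) → ⋂₀ S ∈ C) S hfin (fun _ => by simpa using huniv) ?_
  intro a s _ _ ih hC
  rw [Set.sInter_insert]
  exact hinter _ _ (hC a (Set.mem_insert a s)) (ih fun K hK => hC K (Set.mem_insert_of_mem _ hK))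

lemma C_sUnion {A : Type} (C : Set (Set (List A))) (hempty : (∅ : Set (List A)) ∈ C)
    (hunion : ∀ K L : Set (List A), K ∈ C → L ∈ C → K ∪ L ∈ C)
    (S : Set (Set (List A))) (hfin : S.Finite) :
    (∀ K ∈ S, K ∈ C) → ⋃₀ S ∈ C := by
  refine Set.Finite.induction_on (motive := fun S _ => (∀ K ∈ S, K ∈ C) → ⋃₀ S ∈ C) S hfin (fun _ => by simpa using hempty) ?_
  intro a s _ _ ih hC
  rw [Set.sUnion_insert]
  exact hunion _ _ (hC a (Set.mem_insert a s)) (ih fun K hK => hC K (Set.mem_insert_of_mem _ hK))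

lemma C_quot {A : Type} (C : Set (Set (List A)))
    (hql : ∀ L ∈ C, ∀ u : List A, {w : List A | u ++ w ∈ L} ∈ C)
    (hqr : ∀ L ∈ C, ∀ u : List A, {w : List A | w ++ u ∈ L} ∈ C)
    (K : Set (List A)) (hK : K ∈ C) (p q : List A) :
    {w : List A | p ++ w ++ q ∈ K} ∈ C := by
  have h1 : {w : List A | p ++ w ∈ K} ∈ C := hql K hK p
  have h2 := hqr _ h1 q
  convert h2 using 1
  ext w
  simp [List.append_assoc]

/-! ### C-pairs : reflexivity and multiplicativity -/

section CP
variable {A M : Type} [Monoid M] (C : Set (Set (List A))) (α : List A → M)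

omit [Monoid M] in
lemma CPair_refl (hsurj : Function.Surjective α) (s : M) : CPair C α s s := by
  rintro ⟨K, hK, hsub, hdisj⟩
  obtain ⟨u, rfl⟩ := hsurj s
  have hu : u ∈ K ∩ α ⁻¹' {α u} := ⟨hsub rfl, rfl⟩
  rw [hdisj] at hu
  exact hu

lemma CPair_mul
    (hregC : ∀ K ∈ C, IsReg K)
    (huniv : (Set.univ : Set (List A)) ∈ C)
    (hinter : ∀ K L : Set (List A), K ∈ C → L ∈ C → K ∩ L ∈ C)
    (hql : ∀ L ∈ C, ∀ u : List A, {w : List A | u ++ w ∈ L} ∈ C)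
    (hqr : ∀ L ∈ C, ∀ u : List A, {w : List A | w ++ u ∈ L} ∈ C)
    (hmul : ∀ u v : List A, α (u ++ v) = α u * α v)
    {s t s' t' : M} (h1 : CPair C α s t) (h2 : CPair C α s' t') :
    CPair C α (s * s') (t * t') := by
  rintro ⟨K, hK, hsub, hdisj⟩
  set Q : Set (Set (List A)) := {X | ∃ u : List A, α u = s' ∧ X = {w | w ++ u ∈ K}} with hQ
  have hQfin : Q.Finite := by
    apply (quot_finite K (hregC K hK)).subset
    rintro X ⟨u, hu, rfl⟩
    exact ⟨[], u, by ext w; simp⟩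
  have hQC : ∀ X ∈ Q, X ∈ C := by rintro X ⟨u, hu, rfl⟩; exact hqr K hK u
  have hKQ : ⋂₀ Q ∈ C := C_sInter C huniv hinter Q hQfin hQC
  have hsub1 : α ⁻¹' {s} ⊆ ⋂₀ Q := by
    intro w hw
    rintro X ⟨u, hu, rfl⟩
    apply hsub
    simp only [Set.mem_preimage, Set.mem_singleton_iff] at hw ⊢
    rw [hmul, hw, hu]
  have hne1 : ((⋂₀ Q) ∩ α ⁻¹' {t}).Nonempty := by
    by_contra hcon
    exact h1 ⟨⋂₀ Q, hKQ, hsub1, Set.not_nonempty_iff_eq_empty.mp hcon⟩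
  obtain ⟨wt, hwtQ, hwt⟩ := hne1
  simp only [Set.mem_preimage, Set.mem_singleton_iff] at hwt
  have hK2 : {w | wt ++ w ∈ K} ∈ C := hql K hK wt
  have hsub2 : α ⁻¹' {s'} ⊆ {w | wt ++ w ∈ K} := by
    intro u hu
    simp only [Set.mem_preimage, Set.mem_singleton_iff] at hu
    exact hwtQ _ ⟨u, hu, rfl⟩
  have hne2 : ({w | wt ++ w ∈ K} ∩ α ⁻¹' {t'}).Nonempty := by
    by_contra hcon
    exact h2 ⟨_, hK2, hsub2, Set.not_nonempty_iff_eq_empty.mp hcon⟩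
  obtain ⟨u', hu'K, hu'⟩ := hne2
  simp only [Set.mem_preimage, Set.mem_singleton_iff] at hu'
  have hfin : wt ++ u' ∈ K ∩ α ⁻¹' {t * t'} := ⟨hu'K, by
    simp only [Set.mem_preimage, Set.mem_singleton_iff]; rw [hmul, hwt, hu']⟩
  rw [hdisj] at hfin
  exact hfin

/-! ### Selecting a good pair of words for a C-pair against a finite family -/

omit [Monoid M] in
lemma select
    (hempty : (∅ : Set (List A)) ∈ C) (huniv : (Set.univ : Set (List A)) ∈ C)
    (hunion : ∀ K L : Set (List A), K ∈ C → L ∈ C → K ∪ L ∈ C)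
    (hinter : ∀ K L : Set (List A), K ∈ C → L ∈ C → K ∩ L ∈ C)
    {S T : M} (hp : CPair C α S T)
    (F : Set (Set (List A))) (hfin : F.Finite) (hFC : ∀ K ∈ F, K ∈ C) :
    ∃ U V : List A, α U = S ∧ α V = T ∧ ∀ K ∈ F, U ∈ K → V ∈ K := by
  by_contra hcon
  push_neg at hcon
  apply hp
  set G : Set (Set (List A)) :=
    {X | (∃ Φ, Φ ⊆ F ∧ X = ⋂₀ Φ) ∧ X ∩ α ⁻¹' {T} = ∅} with hG
  have hGfin : G.Finite := by
    apply Set.Finite.subset ((hfin.finite_subsets).image (fun Φ : Set (Set (List A)) => ⋂₀ Φ))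
    rintro X ⟨⟨Φ, hΦ, rfl⟩, -⟩
    exact ⟨Φ, hΦ, rfl⟩
  have hGC : ∀ X ∈ G, X ∈ C := by
    rintro X ⟨⟨Φ, hΦ, rfl⟩, -⟩
    exact C_sInter C huniv hinter Φ (hfin.subset hΦ) (fun K hK => hFC K (hΦ hK))
  refine ⟨⋃₀ G, C_sUnion C hempty hunion G hGfin hGC, ?_, ?_⟩
  · intro U hU
    simp only [Set.mem_preimage, Set.mem_singleton_iff] at hU
    have hmem : ⋂₀ {K | K ∈ F ∧ U ∈ K} ∈ G := by
      refine ⟨⟨{K | K ∈ F ∧ U ∈ K}, fun K hK => hK.1, rfl⟩, ?_⟩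
      rw [Set.eq_empty_iff_forall_notMem]
      rintro V ⟨hVint, hVT⟩
      simp only [Set.mem_preimage, Set.mem_singleton_iff] at hVT
      obtain ⟨K, hKF, hUK, hVnK⟩ := hcon U V hU hVT
      exact hVnK (hVint K ⟨hKF, hUK⟩)
    exact ⟨_, hmem, fun K hK => hK.2⟩
  · rw [Set.eq_empty_iff_forall_notMem]
    rintro V ⟨⟨X, hXG, hVX⟩, hVT⟩
    have hXe := hXG.2
    rw [Set.eq_empty_iff_forall_notMem] at hXe
    exact hXe V ⟨hVX, hVT⟩

end CP

/-! ### The key combinatorial property of languages in Pol(C) -/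

def Good {A : Type} (L' : Set (List A)) (F : Set (Set (List A))) (N : ℕ) : Prop :=
  ∀ U V : List A, (∀ K ∈ F, ∀ x y : List A, x ++ U ++ y ∈ K → x ++ V ++ y ∈ K) →
    ∀ p q : List A, p ++ wpow U N ++ q ∈ L' →
      ∃ c d : ℕ, c + d + 1 = N ∧ p ++ wpow U c ++ V ++ wpow U d ++ q ∈ L'

lemma good_antitone {A : Type} {L' : Set (List A)} {F F' : Set (Set (List A))} {N : ℕ}
    (h : Good L' F N) (hFF : F ⊆ F') : Good L' F' N :=
  fun U V hUV => h U V (fun K hK => hUV K (hFF hK))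

lemma good_mono {A : Type} {L' : Set (List A)} {F : Set (Set (List A))} {N N' : ℕ}
    (h : Good L' F N) (hN : N ≤ N') : Good L' F N' := by
  intro U V hUV p q hm
  have e : wpow U N' = wpow U N ++ wpow U (N' - N) := by
    rw [← wpow_add]; congr 1; omega
  have e2 : p ++ wpow U N' ++ q = p ++ wpow U N ++ (wpow U (N' - N) ++ q) := by
    rw [e]; simp [List.append_assoc]
  rw [e2] at hm
  obtain ⟨c, d, hcd, hm'⟩ := h U V hUV p _ hm
  refine ⟨c, d + (N' - N), by omega, ?_⟩
  have e3 : p ++ wpow U c ++ V ++ wpow U (d + (N' - N)) ++ q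
      = p ++ wpow U c ++ V ++ wpow U d ++ (wpow U (N' - N) ++ q) := by
    simp [wpow_add, List.append_assoc]
  rw [e3]
  exact hm'

lemma pol_good {A : Type} (C : Set (Set (List A))) (L' : Set (List A)) (hL : Pol C L') :
    ∃ (F : Set (Set (List A))) (N : ℕ), 1 ≤ N ∧ F.Finite ∧ (∀ K ∈ F, K ∈ C) ∧ Good L' F N := by
  induction hL with
  | base L h =>
    refine ⟨{L}, 1, le_refl 1, Set.finite_singleton L, by simpa using h, ?_⟩
    intro U V hUV p q hm
    refine ⟨0, 0, rfl, ?_⟩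
    have h1 : p ++ U ++ q ∈ L := by
      have he : p ++ wpow U 1 ++ q = p ++ U ++ q := by simp [wpow, List.append_assoc]
      rwa [he] at hm
    have h2 := hUV L rfl p q h1
    have he2 : p ++ V ++ q = p ++ wpow U 0 ++ V ++ wpow U 0 ++ q := by
      simp [wpow]
    rwa [he2] at h2
  | union H L hH hL ihH ihL =>
    obtain ⟨F1, N1, hN1, hf1, hC1, hg1⟩ := ihH
    obtain ⟨F2, N2, hN2, hf2, hC2, hg2⟩ := ihL
    refine ⟨F1 ∪ F2, max N1 N2, le_trans hN1 (le_max_left _ _), hf1.union hf2,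
      fun K hK => hK.elim (hC1 K) (hC2 K), ?_⟩
    intro U V hUV p q hm
    cases hm with
    | inl h =>
      obtain ⟨c, d, hcd, hm'⟩ :=
        good_mono (good_antitone hg1 Set.subset_union_left) (le_max_left N1 N2) U V hUV p q h
      exact ⟨c, d, hcd, Or.inl hm'⟩
    | inr h =>
      obtain ⟨c, d, hcd, hm'⟩ :=
        good_mono (good_antitone hg2 Set.subset_union_right) (le_max_right N1 N2) U V hUV p q h
      exact ⟨c, d, hcd, Or.inr hm'⟩
  | marked H L a hH hL ihH ihL =>
    obtain ⟨F1, N1, hN1, hf1, hC1, hg1'⟩ := ihH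
    obtain ⟨F2, N2, hN2, hf2, hC2, hg2'⟩ := ihL
    have hg1 : Good H (F1 ∪ F2) N1 := good_antitone hg1' Set.subset_union_left
    have hg2 : Good L (F1 ∪ F2) (N2 + 1) :=
      good_mono (good_antitone hg2' Set.subset_union_right) (Nat.le_succ N2)
    refine ⟨F1 ∪ F2, N1 + N2 + 1, by omega, hf1.union hf2,
      fun K hK => hK.elim (hC1 K) (hC2 K), ?_⟩
    intro U V hUV p q hm
    obtain ⟨u, hu, v, hv, heq⟩ := hm
    have hsplit : p ++ wpow U (N1 + N2 + 1) ++ q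
        = (p ++ wpow U N1) ++ (wpow U (N2 + 1) ++ q) := by
      have he : wpow U (N1 + N2 + 1) = wpow U N1 ++ wpow U (N2 + 1) := by
        rw [Nat.add_assoc, wpow_add]
      rw [he]; simp [List.append_assoc]
    have hpre1 : (p ++ wpow U N1) <+: (p ++ wpow U (N1 + N2 + 1) ++ q) :=
      ⟨wpow U (N2 + 1) ++ q, hsplit.symm⟩
    by_cases hlen : (p ++ wpow U N1).length ≤ u.length
    · -- the marked letter lies to the right of p ++ U^{N1}
      have hpre2 : u <+: (p ++ wpow U (N1 + N2 + 1) ++ q) := ⟨a :: v, heq.symm⟩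
      obtain ⟨r, hr⟩ := List.prefix_of_prefix_length_le hpre1 hpre2 hlen
      have hrv : r ++ a :: v = wpow U (N2 + 1) ++ q := by
        have h5 : (p ++ wpow U N1) ++ (r ++ a :: v)
            = (p ++ wpow U N1) ++ (wpow U (N2 + 1) ++ q) := by
          rw [← List.append_assoc, hr, ← hsplit, heq]
        exact List.append_cancel_left h5
      have huH : p ++ wpow U N1 ++ r ∈ H := by
        have he : p ++ wpow U N1 ++ r = u := by rw [← hr]
        rwa [he]
      obtain ⟨c, d, hcd, hH'⟩ := hg1 U V hUV p r huH
      refine ⟨c, d + (N2 + 1), by omega, ?_⟩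
      refine ⟨p ++ wpow U c ++ V ++ wpow U d ++ r, hH', v, hv, ?_⟩
      calc p ++ wpow U c ++ V ++ wpow U (d + (N2 + 1)) ++ q
          = p ++ wpow U c ++ V ++ wpow U d ++ (wpow U (N2 + 1) ++ q) := by
            simp [wpow_add, List.append_assoc]
        _ = p ++ wpow U c ++ V ++ wpow U d ++ (r ++ a :: v) := by rw [hrv]
        _ = (p ++ wpow U c ++ V ++ wpow U d ++ r) ++ a :: v := by
            simp [List.append_assoc]
    · -- the marked letter lies inside p ++ U^{N1}
      push_neg at hlen
      have hpre2 : (u ++ [a]) <+: (p ++ wpow U (N1 + N2 + 1) ++ q) :=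
        ⟨v, by rw [heq]; simp⟩
      have hlen2 : (u ++ [a]).length ≤ (p ++ wpow U N1).length := by
        simp only [List.length_append, List.length_singleton] at hlen ⊢
        omega
      obtain ⟨r, hr⟩ := List.prefix_of_prefix_length_le hpre2 hpre1 hlen2
      have hveq : v = r ++ (wpow U (N2 + 1) ++ q) := by
        have h5 : (u ++ [a]) ++ v = (u ++ [a]) ++ (r ++ (wpow U (N2 + 1) ++ q)) := by
          have h6 : (u ++ [a]) ++ v = u ++ a :: v := by simp
          rw [h6, ← heq, hsplit, ← hr]
          simp [List.append_assoc]
        exact List.append_cancel_left h5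
      have hvL : r ++ wpow U (N2 + 1) ++ q ∈ L := by
        have he : r ++ wpow U (N2 + 1) ++ q = v := by rw [hveq]; simp [List.append_assoc]
        rwa [he]
      obtain ⟨c, d, hcd, hL'⟩ := hg2 U V hUV r q hvL
      refine ⟨N1 + c, d, by omega, ?_⟩
      refine ⟨u, hu, r ++ wpow U c ++ V ++ wpow U d ++ q, hL', ?_⟩
      calc p ++ wpow U (N1 + c) ++ V ++ wpow U d ++ q
          = (p ++ wpow U N1) ++ (wpow U c ++ (V ++ (wpow U d ++ q))) := by
            simp [wpow_add, List.append_assoc]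
        _ = ((u ++ [a]) ++ r) ++ (wpow U c ++ (V ++ (wpow U d ++ q))) := by rw [hr]
        _ = u ++ a :: (r ++ wpow U c ++ V ++ wpow U d ++ q) := by
            simp [List.append_assoc]

/-! ### Monoid computations with an idempotent power -/

section Pow
variable {M : Type} [Monoid M]

lemma epow {n : ℕ} (hid : ∀ x : M, x ^ n * x ^ n = x ^ n)
    (s : M) : ∀ k : ℕ, 1 ≤ k → (s ^ n) ^ k = s ^ n := by
  intro k hk
  induction k with
  | zero => omega
  | succ k ih =>
    rcases Nat.eq_zero_or_pos k with h | h
    · subst h; simp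
    · rw [pow_succ, ih h, hid]

lemma key1 {n : ℕ} (hn : 1 ≤ n) (hid : ∀ x : M, x ^ n * x ^ n = x ^ n)
    (s : M) (c : ℕ) : s * ((s ^ n) ^ c * s ^ (2 * n - 1)) = s ^ n := by
  rw [← pow_mul, ← pow_add, ← pow_succ']
  have he : (n * c + (2 * n - 1)) + 1 = n * (c + 2) := by
    rw [Nat.mul_add]
    have h2 : n * 2 = 2 * n := by ring
    rw [h2]
    omega
  rw [he, pow_mul]
  exact epow hid s (c + 2) (by omega)

lemma key2 {n : ℕ} (hid : ∀ x : M, x ^ n * x ^ n = x ^ n)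
    (s : M) (d : ℕ) : s ^ n * (s ^ n) ^ d = s ^ n := by
  rw [← pow_succ']
  exact epow hid s (d + 1) (by omega)

lemma midval {n : ℕ} (hn : 1 ≤ n) (hid : ∀ x : M, x ^ n * x ^ n = x ^ n)
    (s t X Y : M) (c d : ℕ) :
    X * s * (s ^ n) ^ c * (s ^ (2 * n - 1) * t * s ^ n) * (s ^ n) ^ d * Y
      = X * (s ^ n * t * s ^ n) * Y := by
  calc X * s * (s ^ n) ^ c * (s ^ (2 * n - 1) * t * s ^ n) * (s ^ n) ^ d * Y
      = X * ((s * ((s ^ n) ^ c * s ^ (2 * n - 1))) * (t * ((s ^ n * (s ^ n) ^ d) * Y))) := by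
        simp only [mul_assoc]
    _ = X * (s ^ n * (t * (s ^ n * Y))) := by rw [key1 hn hid, key2 hid]
    _ = X * (s ^ n * t * s ^ n) * Y := by simp only [mul_assoc]

end Pow

end Stmt10Aux

open Stmt10Aux

theorem stmt_10 {A M : Type} [Monoid M] [Fintype M] [PartialOrder M]
    (hcomp : ∀ a b c d : M, a ≤ b → c ≤ d → a * c ≤ b * d)
    (C : Set (Set (List A)))
    (hregC : ∀ K ∈ C, IsReg K)
    (hempty : (∅ : Set (List A)) ∈ C) (huniv : (Set.univ : Set (List A)) ∈ C)
    (hunion : ∀ K L : Set (List A), K ∈ C → L ∈ C → K ∪ L ∈ C)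
    (hinter : ∀ K L : Set (List A), K ∈ C → L ∈ C → K ∩ L ∈ C)
    (hql : ∀ L ∈ C, ∀ u : List A, {w : List A | u ++ w ∈ L} ∈ C)
    (hqr : ∀ L ∈ C, ∀ u : List A, {w : List A | w ++ u ∈ L} ∈ C)
    (L : Set (List A)) (hregL : IsReg L)
    -- `α : A* → M` is the syntactic morphism of `L` and `≤` its syntactic order
    (α : List A → M)
    (hone : α [] = 1) (hmul : ∀ u v : List A, α (u ++ v) = α u * α v)
    (hsurj : Function.Surjective α)
    (hsynt : ∀ u v : List A,
      α u ≤ α v ↔ ∀ x y : List A, x ++ u ++ y ∈ L → x ++ v ++ y ∈ L)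
    (hL : Pol C L) :
    ∀ n : ℕ, 1 ≤ n → (∀ x : M, x ^ n * x ^ n = x ^ n) →
      ∀ s t : M, CPair C α s t → s ^ (n + 1) ≤ s ^ n * t * s ^ n := by
  intro n hn hid s t hst
  -- α of a word power
  have hα_wpow : ∀ (u : List A) (k : ℕ), α (wpow u k) = (α u) ^ k := by
    intro u k
    induction k with
    | zero => simpa [wpow] using hone
    | succ k ih => rw [wpow, hmul, ih, pow_succ']
  -- exchange of α-equal words in L
  have exch : ∀ w w' : List A, α w = α w' → w ∈ L → w' ∈ L := by
    intro w w' he hw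
    have h := (hsynt w w').mp (le_of_eq he) [] []
    simpa using h (by simpa using hw)
  -- the C-pair (s^n , s^(2n-1) * t * s^n)
  have hTpair : CPair C α (s ^ (2 * n - 1) * s * s ^ n) (s ^ (2 * n - 1) * t * s ^ n) :=
    CPair_mul C α hregC huniv hinter hql hqr hmul
      (CPair_mul C α hregC huniv hinter hql hqr hmul (CPair_refl C α hsurj _) hst)
      (CPair_refl C α hsurj _)
  have hSval : s ^ (2 * n - 1) * s * s ^ n = s ^ n := by
    rw [← pow_succ, ← pow_add]
    have he : (2 * n - 1 + 1) + n = n * 3 := by omega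
    rw [he, pow_mul]
    exact epow hid s 3 (by omega)
  rw [hSval] at hTpair
  -- the combinatorial structure of L
  obtain ⟨F, N, hN1, hFfin, hFC, hgood⟩ := pol_good C L hL
  -- the quotient closure of F
  set Fbar : Set (Set (List A)) :=
    ⋃ K ∈ F, {X : Set (List A) | ∃ p q : List A, X = {w | p ++ w ++ q ∈ K}} with hFbar
  have hFbarfin : Fbar.Finite :=
    Set.Finite.biUnion hFfin (fun K hK => quot_finite K (hregC K (hFC K hK)))
  have hFbarC : ∀ X ∈ Fbar, X ∈ C := by
    intro X hX
    simp only [hFbar, Set.mem_iUnion] at hX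
    obtain ⟨K, hK, p, q, rfl⟩ := hX
    exact C_quot C hql hqr K (hFC K hK) p q
  -- select good representative words
  obtain ⟨U, V, hU, hV, hUV⟩ :=
    select C α hempty huniv hunion hinter hTpair Fbar hFbarfin hFbarC
  have hUVctx : ∀ K ∈ F, ∀ x y : List A, x ++ U ++ y ∈ K → x ++ V ++ y ∈ K := by
    intro K hK x y hxy
    have hXf : {w : List A | x ++ w ++ y ∈ K} ∈ Fbar := by
      simp only [hFbar, Set.mem_iUnion]
      exact ⟨K, hK, x, y, rfl⟩
    exact hUV _ hXf hxy
  -- representative words for s and t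
  obtain ⟨a₀, ha₀⟩ := hsurj s
  obtain ⟨vt, hvt⟩ := hsurj t
  have hw1 : α (wpow a₀ (n + 1)) = s ^ (n + 1) := by rw [hα_wpow, ha₀]
  have hw2 : α (wpow a₀ n ++ vt ++ wpow a₀ n) = s ^ n * t * s ^ n := by
    simp only [hmul, hα_wpow, ha₀, hvt]
  -- the main implication
  have himp : ∀ x y : List A,
      x ++ wpow a₀ (n + 1) ++ y ∈ L → x ++ (wpow a₀ n ++ vt ++ wpow a₀ n) ++ y ∈ L := by
    intro x y hxy
    -- replace the middle word by a₀ followed by N copies of U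
    have hval1 : α (x ++ wpow a₀ (n + 1) ++ y) = α (x ++ a₀ ++ wpow U N ++ y) := by
      simp only [hmul, hα_wpow, hU, ha₀]
      rw [epow hid s N hN1, pow_succ']
      simp only [mul_assoc]
    have hin : x ++ a₀ ++ wpow U N ++ y ∈ L := exch _ _ hval1 hxy
    obtain ⟨c, d, hcd, hmem⟩ := hgood U V hUVctx (x ++ a₀) y hin
    refine exch _ _ ?_ hmem
    -- value computation
    simp only [hmul, hα_wpow, hU, hV, ha₀, hvt]
    exact midval hn hid s t (α x) (α y) c d
  have hle := (hsynt (wpow a₀ (n + 1)) (wpow a₀ n ++ vt ++ wpow a₀ n)).mpr himp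
  rwa [hw1, hw2] at hle
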